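/- Let f(x) = (1/2)xᵀQx with Q symmetric positive semidefinite, and x_{n+1} = (I - ηQ)x_n with ηλ_i ∈ [0,2] for every eigenvalue λ_i of Q. Then the value sequence f(x_n) is convex: f(x_n) - f(x_{n+1}) is nonincreasing in n, i.e., f(x_{n+2}) - 2f(x_{n+1}) + f(x_n) ≥ 0 for all n. -/

import Mathlib

open Matrix

theorem quadratic_gd_values_convex
    (d : ℕ) (Q : Matrix (Fin d) (Fin d) ℝ) (hQ : Q.PosSemidef) (η : ℝ) (hη : 0 ≤ η)
    (hev : ∀ μ : ℝ, Module.End.HasEigenvalue Q.mulVecLin μ → 0 ≤ η * μ ∧ η * μ ≤ 2)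
    (x : ℕ → (Fin d → ℝ)) (hx : ∀ n, x (n + 1) = x n - η • Q.mulVec (x n)) :
    ∀ n : ℕ, 0 ≤ (1 : ℝ) / 2 * (x (n + 2) ⬝ᵥ Q.mulVec (x (n + 2)))
      - 2 * ((1 : ℝ) / 2 * (x (n + 1) ⬝ᵥ Q.mulVec (x (n + 1))))
      + (1 : ℝ) / 2 * (x n ⬝ᵥ Q.mulVec (x n)) := by
  intro n
  have hQT : Qᵀ = Q := hQ.1
  have hswap : ∀ u v : Fin d → ℝ, (Q *ᵥ u) ⬝ᵥ v = u ⬝ᵥ (Q *ᵥ v) := by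
    intro u v
    rw [← hQT, mulVec_transpose, hQT, ← dotProduct_mulVec]
  set y := x n with hy
  set z : Fin d → ℝ := (2*η) • (Q *ᵥ y) - (η^2) • (Q *ᵥ (Q *ᵥ y)) with hz
  have hpos : 0 ≤ z ⬝ᵥ Q *ᵥ z := by
    simpa using hQ.dotProduct_mulVec_nonneg z
  have h1 : x (n+1) = y - η • (Q *ᵥ y) := hx n
  have h2 : x (n+2) = x (n+1) - η • (Q *ᵥ x (n+1)) := hx (n+1)
  rw [h2, h1]
  simp only [hz, mulVec_sub, mulVec_smul, dotProduct_sub, sub_dotProduct,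
    dotProduct_smul, smul_dotProduct, smul_eq_mul, hswap] at hpos ⊢
  ring_nf at hpos ⊢
  linarith [hpos]
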